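/- (Gauss–Jacobi-type quadrature) Let μ be a positive measure with monic orthogonal polynomials p₀,p₁,…, let α ∈ ℝ, and let r₁ < ⋯ < r_n be the roots of p_n + α p_{n−1}. Then there exist positive numbers λ₁,…,λ_n such that for every polynomial f of degree at most 2n−2, ∫ f dμ = ∑_{i=1}^n λ_i f(r_i). -/

import Mathlib

open MeasureTheory Polynomial

/-- Gauss–Jacobi-type quadrature: if `r₁ < ⋯ < r_n` are the roots of `p_n + α p_{n-1}`
(monic orthogonal polynomials for `μ`), then there are positive weights `λᵢ` such that
`∫ f dμ = ∑ λᵢ f(rᵢ)` for all polynomials `f` of degree at most `2n - 2`. -/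
theorem stmt_9 (μ : Measure ℝ)
    (hint : ∀ q : Polynomial ℝ, Integrable (fun x => q.eval x) μ)
    (hpos : ∀ q : Polynomial ℝ, q ≠ 0 → 0 < ∫ x, (q.eval x) ^ 2 ∂μ)
    (p : ℕ → Polynomial ℝ) (hmonic : ∀ i, (p i).Monic) (hdeg : ∀ i, (p i).natDegree = i)
    (horth : ∀ i j, i ≠ j → ∫ x, (p i).eval x * (p j).eval x ∂μ = 0)
    (n : ℕ) (hn : 1 ≤ n) (α : ℝ) (r : ℕ → ℝ)
    (hsort : ∀ i j, i < j → j < n → r i < r j)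
    (hroots : p n + C α * p (n - 1) = ∏ i ∈ Finset.range n, (X - C (r i))) :
    ∃ lam : ℕ → ℝ, (∀ i < n, 0 < lam i) ∧
      ∀ q : Polynomial ℝ, q.natDegree ≤ 2 * n - 2 →
        ∫ x, q.eval x ∂μ = ∑ i ∈ Finset.range n, lam i * q.eval (r i) := by
  have hinj : Set.InjOn r (Finset.range n) := by
    intro i hi j hj hij
    simp only [Finset.coe_range, Set.mem_Iio] at hi hj
    rcases lt_trichotomy i j with h | h | h
    · exact absurd hij (ne_of_lt (hsort i j h hj))
    · exact h
    · exact absurd hij.symm (ne_of_lt (hsort j i h hi))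
  set w : Polynomial ℝ := ∏ i ∈ Finset.range n, (X - C (r i)) with hw
  have hwmonic : w.Monic := monic_prod_of_monic _ _ fun i _ => monic_X_sub_C _
  have hwdeg : w.natDegree = n := by
    rw [hw, natDegree_prod_of_monic _ _ fun i _ => monic_X_sub_C _]
    simp
  have hwdeg' : w.degree = (n : ℕ) := by
    rw [degree_eq_natDegree hwmonic.ne_zero, hwdeg]
  have hweval : ∀ i < n, w.eval (r i) = 0 := by
    intro i hi
    rw [hw, eval_prod]
    exact Finset.prod_eq_zero (Finset.mem_range.2 hi) (by simp)
  have hintmul : ∀ a b : Polynomial ℝ, Integrable (fun x => a.eval x * b.eval x) μ := by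
    intro a b
    simpa using hint (a * b)
  -- orthogonality of p k to lower degree polynomials
  have key : ∀ (m k : ℕ) (s : Polynomial ℝ), s.degree < (m : ℕ) → m ≤ k →
      ∫ x, (p k).eval x * s.eval x ∂μ = 0 := by
    intro m
    induction m with
    | zero =>
      intro k s hs _
      have h0 : s.degree < 0 := by exact_mod_cast hs
      have : s = 0 := degree_eq_bot.1 (Nat.WithBot.lt_zero_iff.1 h0)
      simp [this]
    | succ m ih =>
      intro k s hs hmk
      by_cases hs0 : s = 0
      · simp [hs0]
      · set d := s.natDegree with hd
        set c := s.leadingCoeff with hc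
        have hc0 : c ≠ 0 := leadingCoeff_ne_zero.2 hs0
        have hdm : d ≤ m := by
          have := (natDegree_lt_iff_degree_lt hs0).2 hs
          omega
        have hdegcpd : (C c * p d).degree = s.degree := by
          rw [degree_C_mul hc0, degree_eq_natDegree hs0,
            degree_eq_natDegree (hmonic d).ne_zero, hdeg]
        have hlc : (C c * p d).leadingCoeff = s.leadingCoeff := by
          rw [leadingCoeff_mul, leadingCoeff_C, (hmonic d).leadingCoeff, mul_one]
        have hsub : (s - C c * p d).degree < (m : ℕ) := by
          rcases eq_or_ne (s - C c * p d) 0 with h | h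
          · rw [h, degree_zero]
            exact WithBot.bot_lt_coe _
          · have h1 : (s - C c * p d).degree < s.degree :=
              degree_sub_lt hdegcpd.symm hs0 hlc.symm
            have h2 : s.degree ≤ ((m : ℕ) : WithBot ℕ) := by
              rw [degree_eq_natDegree hs0]
              exact_mod_cast hdm
            exact lt_of_lt_of_le h1 h2
        have hrec := ih k (s - C c * p d) hsub (le_of_lt (Nat.lt_of_lt_of_le (Nat.lt_succ_self m) hmk))
        have hdk : d ≠ k := by omega
        have hpd := horth k d (by omega)
        have hsplit : (fun x => (p k).eval x * s.eval x) =
            (fun x => (p k).eval x * (s - C c * p d).eval x +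
              c * ((p k).eval x * (p d).eval x)) := by
          funext x
          simp [eval_sub, eval_mul, eval_C]
          ring
        rw [hsplit, integral_add]
        · rw [hrec, integral_const_mul, hpd, mul_zero, add_zero]
        · simpa using hint (p k * (s - C c * p d))
        · have := hint (C c * (p k * p d))
          simpa [mul_assoc] using this
  -- the weights
  set L : ℕ → Polynomial ℝ := fun i => Lagrange.basis (Finset.range n) r i with hL
  set lam : ℕ → ℝ := fun i => ∫ x, (L i).eval x ∂μ with hlam
  have hform : ∀ q : Polynomial ℝ, q.natDegree ≤ 2 * n - 2 →
      ∫ x, q.eval x ∂μ = ∑ i ∈ Finset.range n, lam i * q.eval (r i) := by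
    intro q hq
    set s := q /ₘ w with hs
    set t := q %ₘ w with ht
    have hqdecomp : t + w * s = q := modByMonic_add_div q w
    have htdeg : t.degree < (n : ℕ) := by
      rw [← hwdeg']
      exact degree_modByMonic_lt q hwmonic
    have hsdeg : s.degree < ((n - 1 : ℕ) : WithBot ℕ) := by
      rcases eq_or_ne s 0 with h | h
      · rw [h, degree_zero]
        exact WithBot.bot_lt_coe _
      · have hge : ¬ q.degree < w.degree := by
          intro hlt
          exact h ((divByMonic_eq_zero_iff hwmonic).2 hlt)
        have hq0 : q ≠ 0 := by
          rintro rfl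
          exact hge (by rw [degree_zero, hwdeg']; exact WithBot.bot_lt_coe _)
        have hqn : n ≤ q.natDegree := by
          by_contra hcon
          exact hge (by
            rw [hwdeg', degree_eq_natDegree hq0]
            exact_mod_cast Nat.lt_of_not_le hcon)
        have hsnd : s.natDegree = q.natDegree - n := by
          rw [hs, natDegree_divByMonic q hwmonic, hwdeg]
        rw [← natDegree_lt_iff_degree_lt h, hsnd]
        omega
    -- integral of w * s vanishes
    have hws : ∫ x, w.eval x * s.eval x ∂μ = 0 := by
      have h1 : ∫ x, (p n).eval x * s.eval x ∂μ = 0 :=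
        key (n - 1) n s hsdeg (by omega)
      have h2 : ∫ x, (p (n - 1)).eval x * s.eval x ∂μ = 0 :=
        key (n - 1) (n - 1) s hsdeg le_rfl
      have hsplit : (fun x => w.eval x * s.eval x) =
          (fun x => (p n).eval x * s.eval x + α * ((p (n - 1)).eval x * s.eval x)) := by
        funext x
        rw [← hroots]
        simp [eval_add, eval_mul, eval_C]
        ring
      rw [hsplit, integral_add (hintmul _ _)]
      · rw [h1, integral_const_mul, h2, mul_zero, add_zero]
      · have := hint (C α * (p (n - 1) * s))
        simpa [mul_assoc] using this
    -- t equals its interpolation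
    have htinterp : t = ∑ i ∈ Finset.range n, C (t.eval (r i)) * L i := by
      have := Lagrange.eq_interpolate (f := t) hinj (by simpa using htdeg)
      conv_lhs => rw [this]
      rw [Lagrange.interpolate_apply]
    have htq : ∀ i < n, t.eval (r i) = q.eval (r i) := by
      intro i hi
      rw [← hqdecomp]
      simp [eval_add, eval_mul, hweval i hi]
    have hti : ∫ x, t.eval x ∂μ = ∑ i ∈ Finset.range n, lam i * q.eval (r i) := by
      have heval : (fun x => t.eval x) =
          (fun x => ∑ i ∈ Finset.range n, q.eval (r i) * (L i).eval x) := by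
        funext x
        conv_lhs => rw [htinterp]
        rw [eval_finset_sum]
        refine Finset.sum_congr rfl fun i hi => ?_
        rw [eval_mul, eval_C, htq i (Finset.mem_range.1 hi)]
      rw [heval, integral_finset_sum]
      · refine Finset.sum_congr rfl fun i hi => ?_
        rw [integral_const_mul, hlam]
        ring
      · intro i _
        have := hint (C (q.eval (r i)) * L i)
        simpa using this
    calc ∫ x, q.eval x ∂μ = ∫ x, (t.eval x + w.eval x * s.eval x) ∂μ := by
          congr 1; funext x; rw [← hqdecomp]; simp [eval_add, eval_mul]
      _ = (∫ x, t.eval x ∂μ) + ∫ x, w.eval x * s.eval x ∂μ := by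
          rw [integral_add (hint t) (hintmul w s)]
      _ = ∑ i ∈ Finset.range n, lam i * q.eval (r i) := by
          rw [hws, add_zero, hti]
  refine ⟨lam, fun i hi => ?_, hform⟩
  have hiL : (L i).eval (r i) = 1 := Lagrange.eval_basis_self hinj (Finset.mem_range.2 hi)
  have hL0 : L i ≠ 0 := fun h => by simp [h] at hiL
  have hLdeg : (L i).natDegree = n - 1 := by
    have := Lagrange.degree_basis hinj (Finset.mem_range.2 hi)
    rw [hL]
    have := natDegree_eq_of_degree_eq_some (by simpa [Finset.card_range] using this)
    simpa using this
  have hsq : ((L i) ^ 2).natDegree ≤ 2 * n - 2 := by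
    rw [natDegree_pow, hLdeg]
    omega
  have := hform ((L i) ^ 2) hsq
  have hsum : ∑ j ∈ Finset.range n, lam j * ((L i) ^ 2).eval (r j) = lam i := by
    rw [Finset.sum_eq_single i]
    · simp [hiL]
    · intro j hj hji
      have : (L i).eval (r j) = 0 :=
        Lagrange.eval_basis_of_ne (Ne.symm hji) hj
      simp [this]
    · intro h
      exact absurd (Finset.mem_range.2 hi) h
  rw [hsum] at this
  rw [← this]
  have hposL := hpos (L i) hL0
  calc (0 : ℝ) < ∫ x, ((L i).eval x) ^ 2 ∂μ := hposL
    _ = ∫ x, ((L i) ^ 2).eval x ∂μ := by simp [pow_two, eval_mul]
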